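/- Let z_1, z_3, z_4 be independent {-1,0,1}-valued random variables each with Pr[z_i = 1] = Pr[z_i = -1] = p/2 and Pr[z_i = 0] = 1-p, and set M = (1/2)(z_1 + z_3 - z_4 + z_1 z_3 z_4). Then for all p ∈ [0,1], E|M| = (3/2)p - (3/2)p² + p³. -/

import Mathlib

open Finset

noncomputable section

/-- Sign function: `1` for positive arguments, `-1` otherwise. -/
def sgn (t : ℝ) : ℝ := if 0 < t then 1 else -1

/-- Real value of a Boolean sign: `true ↦ 1`, `false ↦ -1`. -/
def val (b : Bool) : ℝ := if b then 1 else -1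

/-- Fourier coefficient `f̂(S) = 2^{-n} ∑_{x ∈ {-1,1}^n} f(x) ∏_{i∈S} x_i`. -/
def fCoeff (n : ℕ) (f : (Fin n → ℝ) → ℝ) (S : Finset (Fin n)) : ℝ :=
  (2 ^ n : ℝ)⁻¹ * ∑ b : Fin n → Bool, f (fun i => val (b i)) * ∏ i ∈ S, val (b i)

/-- Multilinear extension `F(z) = ∑_S f̂(S) ∏_{i∈S} z_i`. -/
def mlin (n : ℕ) (f : (Fin n → ℝ) → ℝ) (z : Fin n → ℝ) : ℝ :=
  ∑ S : Finset (Fin n), fCoeff n f S * ∏ i ∈ S, z i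

/-- Value of an erasure symbol: `0 ↦ 0`, `1 ↦ 1`, `2 ↦ -1`. -/
def eval3 (k : Fin 3) : ℝ := if k = 0 then 0 else if k = 1 then 1 else -1

/-- Erasure weight: `Pr[z_i = 0] = 1 - p`, `Pr[z_i = 1] = Pr[z_i = -1] = p/2`. -/
def wt (p : ℝ) (k : Fin 3) : ℝ := if k = 0 then 1 - p else p / 2

/-- `Φ_p(f) = E_z |F(z)|` under the erasure distribution at rate `p`. -/
def Phi (n : ℕ) (p : ℝ) (f : (Fin n → ℝ) → ℝ) : ℝ :=
  ∑ e : Fin n → Fin 3, (∏ i, wt p (e i)) * |mlin n f (fun i => eval3 (e i))|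

lemma sum_pi3 (F : (Fin 3 → Fin 3) → ℝ) :
    ∑ e : Fin 3 → Fin 3, F e = ∑ a : Fin 3, ∑ b : Fin 3, ∑ c : Fin 3, F ![a,b,c] := by
  rw [← (Fin.consEquiv (fun _ : Fin 3 => Fin 3)).sum_comp, Fintype.sum_prod_type]
  congr 1; ext a
  rw [← (Fin.consEquiv (fun _ : Fin 2 => Fin 3)).sum_comp, Fintype.sum_prod_type]
  congr 1; ext b
  rw [← (Equiv.funUnique (Fin 1) (Fin 3)).symm.sum_comp]
  congr 1; ext c
  congr 1
  ext i
  fin_cases i <;> rfl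

theorem stmt13 (p : ℝ) (hp : p ∈ Set.Icc (0 : ℝ) 1) :
    ∑ e : Fin 3 → Fin 3, (∏ i, wt p (e i)) *
        |(1/2 : ℝ) * (eval3 (e 0) + eval3 (e 1) - eval3 (e 2)
            + eval3 (e 0) * eval3 (e 1) * eval3 (e 2))|
      = 3/2 * p - 3/2 * p ^ 2 + p ^ 3 := by
  rw [sum_pi3]
  simp only [Fin.sum_univ_three, Fin.prod_univ_three]
  simp only [Matrix.cons_val_zero, Matrix.cons_val_one, Matrix.cons_val_two, Matrix.head_cons, Matrix.tail_cons]
  norm_num [eval3, wt, Fin.ext_iff, abs_of_pos]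
  ring
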